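/- Every partition of n with n ≥ k²+2k (k ≥ 1) is uniquely determined by its set of k-deletions: if λ and λ' are partitions of n with the same set of k-deletions, then λ = λ'. -/

import Mathlib

/-- A partition: a nonincreasing sequence of naturals (rows indexed from 0),
with finitely many nonzero parts. -/
def IsPartition (f : ℕ → ℕ) : Prop :=
  (∀ ⦃i j : ℕ⦄, i ≤ j → f j ≤ f i) ∧ {i | f i ≠ 0}.Finite

/-- The number of cells of a partition. -/
noncomputable def psize (f : ℕ → ℕ) : ℕ := ∑ᶠ i, f i

/-- `δ` is a `k`-deletion of `f`: a partition contained in `f` with `k` fewer cells. -/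
def IsDeletion (k : ℕ) (δ f : ℕ → ℕ) : Prop :=
  IsPartition δ ∧ (∀ i, δ i ≤ f i) ∧ psize f = psize δ + k

/-- The conjugate: `conj f c` is the number of cells in (0-indexed) column `c`. -/
noncomputable def conj (f : ℕ → ℕ) (c : ℕ) : ℕ := Set.ncard {i | c < f i}

lemma IsPartition.exists_bound {f : ℕ → ℕ} (hf : IsPartition f) :
    ∃ B, ∀ j, B ≤ j → f j = 0 := by
  obtain ⟨B, hB⟩ := hf.2.bddAbove
  exact ⟨B + 1, fun j hj => by
    by_contra h
    exact absurd (hB (by exact h : j ∈ {i | f i ≠ 0})) (by omega)⟩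

lemma psize_eq_sum_range {f : ℕ → ℕ} {B : ℕ} (hB : ∀ j, B ≤ j → f j = 0) :
    psize f = ∑ j ∈ Finset.range B, f j := by
  apply finsum_eq_finset_sum_of_support_subset
  intro x hx
  simp only [Function.mem_support] at hx
  simp only [Finset.coe_range, Set.mem_Iio]
  by_contra h
  exact hx (hB x (by omega))

lemma sum_range_le_psize {f : ℕ → ℕ} (hf : IsPartition f) (M : ℕ) :
    ∑ j ∈ Finset.range M, f j ≤ psize f := by
  obtain ⟨B, hB⟩ := hf.exists_bound
  have h2 : ∀ j, max B M ≤ j → f j = 0 := fun j hj => hB j (le_trans (le_max_left _ _) hj)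
  rw [psize_eq_sum_range h2]
  exact Finset.sum_le_sum_of_subset (by simp)

lemma rect_le_sum {f : ℕ → ℕ} (hf : IsPartition f) (i : ℕ) :
    (i + 1) * f i ≤ ∑ j ∈ Finset.range (i + 1), f j := by
  calc (i + 1) * f i = ∑ _j ∈ Finset.range (i + 1), f i := by
        simp [Finset.sum_const, mul_comm]
    _ ≤ _ := Finset.sum_le_sum (fun j hj => hf.1 (by simp at hj; omega))

lemma rect_le_psize {f : ℕ → ℕ} (hf : IsPartition f) (i : ℕ) :
    (i + 1) * f i ≤ psize f :=
  le_trans (rect_le_sum hf i) (sum_range_le_psize hf _)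

lemma psize_update_succ {f : ℕ → ℕ} {B j v : ℕ} (hB : ∀ x, B ≤ x → f x = 0)
    (hj : f j = v + 1) :
    psize (Function.update f j v) + 1 = psize f := by
  have hjB : j < B := by
    by_contra h
    have := hB j (by omega); omega
  have hB' : ∀ x, B ≤ x → Function.update f j v x = 0 := by
    intro x hx
    rw [Function.update_apply]
    split
    · omega
    · exact hB x hx
  rw [psize_eq_sum_range hB, psize_eq_sum_range hB']
  rw [Finset.sum_update_of_mem (Finset.mem_range.2 hjB)]
  have : ∑ x ∈ Finset.range B, f x =
      f j + ∑ x ∈ Finset.range B \ {j}, f x := by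
    rw [Finset.sum_eq_add_sum_sdiff_singleton_of_mem (i := j) (Finset.mem_range.2 hjB)]
  omega

lemma remove_one {ν : ℕ → ℕ} (hν : IsPartition ν) (i : ℕ)
    (h : (i + 1) * ν i < psize ν) :
    ∃ ρ, IsPartition ρ ∧ (∀ x, ρ x ≤ ν x) ∧ ρ i = ν i ∧ psize ρ + 1 = psize ν := by
  obtain ⟨B, hB⟩ : ∃ B, ∀ j, B ≤ j → ν j = 0 := by
    obtain ⟨B, hB⟩ := hν.2.bddAbove
    exact ⟨B + 1, fun j hj => by
      by_contra hc
      exact absurd (hB (hc : j ∈ {x | ν x ≠ 0})) (by omega)⟩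
  -- find the row to remove a cell from
  have key : ∃ j₀, (i ≠ j₀) ∧ (∀ x y, x ≤ y → y ≠ j₀ →
      Function.update ν j₀ (ν j₀ - 1) y ≤ ν x) ∧ 1 ≤ ν j₀ ∧
      (∀ x, x < j₀ → ν j₀ - 1 ≤ ν x) ∧ (∀ y, j₀ < y → ν y ≤ ν j₀ - 1) := by
    by_cases hA : ∃ j, i < j ∧ 0 < ν j
    · -- remove from the last nonzero row below row i
      set P : ℕ → Prop := fun j => i < j ∧ 0 < ν j with hP
      have : DecidablePred P := fun _ => instDecidableAnd
      obtain ⟨j, hj⟩ := hA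
      have hjB : j ≤ B := by
        by_contra hc
        have := hB j (by omega); omega
      have hspec : P (Nat.findGreatest P B) := Nat.findGreatest_spec hjB hj
      set j₀ := Nat.findGreatest P B with hj₀
      have hzero : ∀ y, j₀ < y → ν y = 0 := by
        intro y hy
        by_cases hyB : y ≤ B
        · have := Nat.findGreatest_is_greatest hy hyB
          simp only [hP, not_and_or, not_lt, Nat.not_lt] at this
          rcases this with h1 | h1
          · omega
          · omega
        · exact hB y (by omega)
      refine ⟨j₀, by omega, ?_, hspec.2, fun x hx => ?_, fun y hy => ?_⟩
      · intro x y hxy hyj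
        rw [Function.update_of_ne hyj]
        exact hν.1 hxy
      · exact le_trans (by omega) (hν.1 (le_of_lt hx))
      · rw [hzero y hy]; omega
    · -- remove from the last row strictly longer than row i
      push_neg at hA
      set Q : ℕ → Prop := fun j => ν i < ν j with hQ
      have : DecidablePred Q := fun _ => Nat.decLt _ _
      have hBQ : ∃ j, j ≤ B ∧ Q j := by
        by_contra hc
        push_neg at hc
        -- then ν is constant ν i up to i and 0 after, contradicting h
        have hle : ∀ j, ν j ≤ ν i := by
          intro j
          by_cases hjB : j ≤ B
          · have := hc j hjB; simp only [hQ, not_lt] at this; exact this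
          · rw [hB j (by omega)]; exact Nat.zero_le _
        have hsum : psize ν ≤ (i + 1) * ν i := by
          have h2 : ∀ j, max B (i+1) ≤ j → ν j = 0 := fun j hj => hB j (le_trans (le_max_left _ _) hj)
          rw [psize_eq_sum_range h2]
          have : ∀ j ∈ Finset.range (max B (i+1)), ν j ≤ (if j ≤ i then ν i else 0) := by
            intro j _
            split
            · exact hle j
            · exact hA j (by omega)
          calc ∑ j ∈ Finset.range (max B (i+1)), ν j
              ≤ ∑ j ∈ Finset.range (max B (i+1)), (if j ≤ i then ν i else 0) :=
                Finset.sum_le_sum this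
            _ ≤ ∑ _j ∈ Finset.range (i+1), ν i := by
                rw [← Finset.sum_filter]
                apply Finset.sum_le_sum_of_subset
                intro x hx
                simp only [Finset.mem_filter, Finset.mem_range] at hx ⊢
                omega
            _ = (i + 1) * ν i := by simp [mul_comm]
        omega
      obtain ⟨j, hjB, hj⟩ := hBQ
      have hspec : Q (Nat.findGreatest Q B) := Nat.findGreatest_spec hjB hj
      set j₀ := Nat.findGreatest Q B with hj₀
      have hsmall : ∀ y, j₀ < y → ν y ≤ ν i := by
        intro y hy
        by_cases hyB : y ≤ B
        · have := Nat.findGreatest_is_greatest hy hyB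
          simp only [hQ, not_lt] at this; exact this
        · rw [hB y (by omega)]; exact Nat.zero_le _
      have hij₀ : j₀ < i := by
        by_contra hc
        have := hν.1 (not_lt.1 hc : i ≤ j₀)
        simp only [hQ] at hspec; omega
      refine ⟨j₀, by omega, ?_, by simp only [hQ] at hspec; omega, fun x hx => ?_, fun y hy => ?_⟩
      · intro x y hxy hyj
        rw [Function.update_of_ne hyj]
        exact hν.1 hxy
      · exact le_trans (by omega) (hν.1 (le_of_lt hx))
      · have := hsmall y hy
        simp only [hQ] at hspec
        omega
  obtain ⟨j₀, hij, hmono2, hpos, hlt, hgt⟩ := key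
  refine ⟨Function.update ν j₀ (ν j₀ - 1), ⟨?_, ?_⟩, ?_, ?_, ?_⟩
  · -- monotone
    intro x y hxy
    by_cases hyj : y = j₀
    · rcases eq_or_ne x j₀ with hxj | hxj
      · rw [hyj, hxj, Function.update_self]
      · rw [hyj, Function.update_self, Function.update_of_ne hxj]
        have hxle : x ≤ j₀ := hyj ▸ hxy
        exact hlt x (lt_of_le_of_ne hxle hxj)
    · rw [Function.update_of_ne hyj]
      by_cases hxj : x = j₀
      · rw [hxj, Function.update_self]
        have : j₀ ≤ y := hxj ▸ hxy
        exact hgt y (lt_of_le_of_ne this (fun hc => hyj hc.symm))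
      · rw [Function.update_of_ne hxj]
        exact hν.1 hxy
  · -- finite support
    apply hν.2.subset
    intro x hx
    simp only [Set.mem_setOf_eq] at hx ⊢
    by_cases hxj : x = j₀
    · subst hxj; omega
    · rwa [Function.update_of_ne hxj] at hx
  · intro x
    by_cases hxj : x = j₀
    · subst hxj; rw [Function.update_self]; omega
    · rw [Function.update_of_ne hxj]
  · exact Function.update_of_ne hij _ _
  · exact psize_update_succ hB (by omega)

lemma remove_many {ν : ℕ → ℕ} (hν : IsPartition ν) (i r : ℕ)
    (h : (i + 1) * ν i + r ≤ psize ν) :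
    ∃ ρ, IsPartition ρ ∧ (∀ x, ρ x ≤ ν x) ∧ ρ i = ν i ∧ psize ρ + r = psize ν := by
  induction r with
  | zero => exact ⟨ν, hν, fun x => le_refl _, rfl, by omega⟩
  | succ r ih =>
    obtain ⟨ρ, hρ, hle, hi, hsize⟩ := ih (by omega)
    obtain ⟨σ, hσ, hle', hi', hsize'⟩ := remove_one hρ i (by rw [hi]; omega)
    exact ⟨σ, hσ, fun x => le_trans (hle' x) (hle x), by rw [hi', hi],
      by omega⟩


lemma Rfact {k : ℕ} {f g : ℕ → ℕ} (hf : IsPartition f)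
    (hdel : ∀ δ : ℕ → ℕ, IsDeletion k δ f → IsDeletion k δ g)
    {i : ℕ} (hlt : g i < f i) : psize f + 1 ≤ (i + 1) * f i + k := by
  by_contra hc
  push_neg at hc
  obtain ⟨ρ, hρ, hle, hi, hsize⟩ := remove_many hf i k (by omega)
  have hdg := hdel ρ ⟨hρ, hle, by omega⟩
  have := hdg.2.1 i
  omega

lemma col_set_eq {f : ℕ → ℕ} {B : ℕ} (hB : ∀ j, B ≤ j → f j = 0) (c : ℕ) :
    {i | c < f i} = ↑((Finset.range B).filter fun i => c < f i) := by
  ext x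
  simp only [Set.mem_setOf_eq, Finset.coe_filter, Finset.mem_range, Set.mem_setOf_eq]
  constructor
  · intro hx
    refine ⟨?_, hx⟩
    by_contra h
    rw [hB x (by omega)] at hx
    omega
  · tauto

lemma conj_eq_card {f : ℕ → ℕ} {B : ℕ} (hB : ∀ j, B ≤ j → f j = 0) (c : ℕ) :
    conj f c = ((Finset.range B).filter fun i => c < f i).card := by
  rw [conj, col_set_eq hB c, Set.ncard_coe_finset]

lemma col_set_finite {f : ℕ → ℕ} (hf : IsPartition f) (c : ℕ) :
    {i | c < f i}.Finite := by
  obtain ⟨B, hB⟩ := hf.exists_bound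
  rw [col_set_eq hB c]
  exact (Finset.finite_toSet _)

lemma conj_isPartition {f : ℕ → ℕ} (hf : IsPartition f) : IsPartition (conj f) := by
  constructor
  · intro c c' hcc
    exact Set.ncard_le_ncard (fun x hx => lt_of_le_of_lt hcc hx)
      (col_set_finite hf c)
  · apply Set.Finite.subset (Set.finite_Iio (f 0))
    intro c hc
    simp only [Set.mem_setOf_eq] at hc
    simp only [Set.mem_Iio]
    by_contra h
    apply hc
    rw [conj]
    convert Set.ncard_empty ℕ
    ext x
    simp only [Set.mem_setOf_eq, Set.mem_empty_iff_false, iff_false, not_lt]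
    exact le_trans (hf.1 (Nat.zero_le x)) (by omega)

lemma conj_le_conj {f g : ℕ → ℕ} (hg : IsPartition g) (hle : ∀ i, f i ≤ g i) (c : ℕ) :
    conj f c ≤ conj g c :=
  Set.ncard_le_ncard (fun x hx => lt_of_lt_of_le hx (hle x)) (col_set_finite hg c)

lemma lower_set_eq_Iio {S : Set ℕ} (hfin : S.Finite)
    (hlow : ∀ x y, x ≤ y → y ∈ S → x ∈ S) : S = Set.Iio S.ncard := by
  rcases S.eq_empty_or_nonempty with h | h
  · rw [h]; ext x; simp
  · obtain ⟨m, hmS, hmax⟩ := Set.Finite.exists_maximalFor id S hfin h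
    have : S = Set.Iic m := by
      ext x
      simp only [Set.mem_Iic]
      constructor
      · intro hx
        by_contra hc
        have := hmax hx
        simp only [id] at this
        have := this (by omega)
        omega
      · intro hx
        exact hlow x m hx hmS
    rw [this]
    have : Set.Iic m = Set.Iio (m + 1) := by
      ext x; simp [Nat.lt_succ_iff]
    rw [this]
    have hn : (Set.Iio (m+1) : Set ℕ).ncard = m + 1 := by
      rw [← Finset.coe_Iio, Set.ncard_coe_finset, Nat.card_Iio]
    rw [hn]

lemma conj_zero_of_ge {f : ℕ → ℕ} (hf : IsPartition f) {c : ℕ} (hc : f 0 ≤ c) :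
    conj f c = 0 := by
  rw [conj]
  convert Set.ncard_empty ℕ
  ext x
  simp only [Set.mem_setOf_eq, Set.mem_empty_iff_false, iff_false, not_lt]
  exact le_trans (hf.1 (Nat.zero_le x)) hc

lemma conj_conj {f : ℕ → ℕ} (hf : IsPartition f) : conj (conj f) = f := by
  have hS : ∀ c, {j | c < f j} = Set.Iio (conj f c) := by
    intro c
    exact lower_set_eq_Iio (col_set_finite hf c)
      (fun x y hxy hy => lt_of_lt_of_le hy (hf.1 hxy))
  funext i
  have : {c | i < conj f c} = Set.Iio (f i) := by
    ext c
    simp only [Set.mem_setOf_eq, Set.mem_Iio]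
    constructor
    · intro hc
      have : i ∈ Set.Iio (conj f c) := hc
      rw [← hS c] at this
      exact this
    · intro hc
      have : i ∈ {j | c < f j} := hc
      rw [hS c] at this
      exact this
  rw [conj, this, ← Finset.coe_Iio, Set.ncard_coe_finset, Nat.card_Iio]

lemma psize_conj {f : ℕ → ℕ} (hf : IsPartition f) : psize (conj f) = psize f := by
  obtain ⟨B, hB⟩ := hf.exists_bound
  have hconjB : ∀ c, f 0 ≤ c → conj f c = 0 := fun c hc => conj_zero_of_ge hf hc
  rw [psize_eq_sum_range hconjB, psize_eq_sum_range hB]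
  have h1 : ∀ c ∈ Finset.range (f 0),
      conj f c = ∑ i ∈ Finset.range B, if c < f i then 1 else 0 := by
    intro c _
    rw [conj_eq_card hB c, Finset.card_filter]
  rw [Finset.sum_congr rfl h1, Finset.sum_comm]
  apply Finset.sum_congr rfl
  intro i _
  rw [← Finset.card_filter]
  have : (Finset.range (f 0)).filter (fun x => x < f i) = Finset.range (f i) := by
    ext x
    simp only [Finset.mem_filter, Finset.mem_range]
    have : f i ≤ f 0 := hf.1 (Nat.zero_le i)
    omega
  rw [this, Finset.card_range]

lemma conj_bnd {u : ℕ → ℕ} (hu : IsPartition u) (c i : ℕ) :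
    (c + 1) * conj u c + ∑ j ∈ Finset.range (i + 1), u j
      ≤ (c + 1) * (i + 1) + psize u := by
  obtain ⟨B₀, hB₀⟩ := hu.exists_bound
  set B := max B₀ (i + 1) with hBdef
  have hB : ∀ j, B ≤ j → u j = 0 := fun j hj => hB₀ j (le_trans (le_max_left _ _) hj)
  have hsub : Finset.range (i + 1) ⊆ Finset.range B := by
    apply Finset.range_subset_range.2; omega
  set F := (Finset.range B).filter (fun j => c < u j) with hF
  have hcard : conj u c = F.card := conj_eq_card hB c
  set F1 := F.filter (fun j => j < i + 1) with hF1
  set F2 := F.filter (fun j => ¬ j < i + 1) with hF2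
  have hsplit : F1.card + F2.card = F.card := Finset.card_filter_add_card_filter_not _
  have h1 : F1.card ≤ i + 1 := by
    calc F1.card ≤ (Finset.range (i+1)).card := Finset.card_le_card (by
      intro x hx
      simp only [hF1, Finset.mem_filter] at hx
      simp only [Finset.mem_range]
      omega)
    _ = i + 1 := Finset.card_range _
  have h2 : F2.card * (c + 1) ≤ ∑ j ∈ F2, u j := by
    calc F2.card * (c + 1) = ∑ _j ∈ F2, (c + 1) := by simp [mul_comm]
    _ ≤ ∑ j ∈ F2, u j := Finset.sum_le_sum (by
      intro j hj
      simp only [hF2, hF, Finset.mem_filter] at hj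
      omega)
  have h3 : ∑ j ∈ F2, u j ≤ ∑ j ∈ Finset.range B \ Finset.range (i+1), u j := by
    apply Finset.sum_le_sum_of_subset
    intro x hx
    simp only [hF2, hF, Finset.mem_filter, Finset.mem_range] at hx
    simp only [Finset.mem_sdiff, Finset.mem_range]
    omega
  have h4 : ∑ j ∈ Finset.range B \ Finset.range (i+1), u j
      + ∑ j ∈ Finset.range (i+1), u j = ∑ j ∈ Finset.range B, u j :=
    Finset.sum_sdiff hsub
  have h5 : psize u = ∑ j ∈ Finset.range B, u j := psize_eq_sum_range hB
  calc (c + 1) * conj u c + ∑ j ∈ Finset.range (i + 1), u j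
      = (c+1) * F1.card + (c+1) * F2.card + ∑ j ∈ Finset.range (i + 1), u j := by
        rw [hcard, ← hsplit]; ring
    _ ≤ (c+1) * (i+1) + ∑ j ∈ Finset.range B \ Finset.range (i+1), u j
        + ∑ j ∈ Finset.range (i + 1), u j := by
        have := le_trans h2 h3
        have h1' : (c+1) * F1.card ≤ (c+1)*(i+1) := Nat.mul_le_mul_left _ h1
        have h2' : (c+1) * F2.card ≤ ∑ j ∈ Finset.range B \ Finset.range (i+1), u j := by
          rw [mul_comm]; exact this
        omega
    _ = (c + 1) * (i + 1) + psize u := by rw [add_assoc, h4, h5]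

lemma conj_ge_of_row {f : ℕ → ℕ} (hf : IsPartition f) {i c : ℕ} (h : c < f i) :
    i + 1 ≤ conj f c := by
  have hsub : Set.Iio (i+1) ⊆ {j | c < f j} := by
    intro x hx
    simp only [Set.mem_Iio] at hx
    exact lt_of_lt_of_le h (hf.1 (by omega))
  calc i + 1 = (Set.Iio (i+1) : Set ℕ).ncard := by
        rw [← Finset.coe_Iio, Set.ncard_coe_finset, Nat.card_Iio]
    _ ≤ _ := Set.ncard_le_ncard hsub (col_set_finite hf c)

lemma conj_le_of_row {g : ℕ → ℕ} (hg : IsPartition g) (i : ℕ) :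
    conj g (g i) ≤ i := by
  have hsub : {j | g i < g j} ⊆ Set.Iio i := by
    intro x hx
    simp only [Set.mem_setOf_eq] at hx
    simp only [Set.mem_Iio]
    by_contra h
    exact absurd (hg.1 (not_lt.1 h : i ≤ x)) (by omega)
  calc conj g (g i) ≤ (Set.Iio i : Set ℕ).ncard :=
        Set.ncard_le_ncard hsub (Set.finite_Iio i)
    _ = i := by rw [← Finset.coe_Iio, Set.ncard_coe_finset, Nat.card_Iio]

lemma del_conj {k : ℕ} {δ u : ℕ → ℕ} (hu : IsPartition u) (hδ : IsDeletion k δ u) :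
    IsDeletion k (conj δ) (conj u) :=
  ⟨conj_isPartition hδ.1, fun c => conj_le_conj hu hδ.2.1 c, by
    rw [psize_conj hu, psize_conj hδ.1]; exact hδ.2.2⟩

lemma eq_of_le_psize {u v : ℕ → ℕ} (hu : IsPartition u) (hv : IsPartition v)
    (hs : psize u = psize v) (hle : ∀ i, u i ≤ v i) : u = v := by
  obtain ⟨B₀, hB₀⟩ := hu.exists_bound
  obtain ⟨B₁, hB₁⟩ := hv.exists_bound
  have hBu : ∀ j, max B₀ B₁ ≤ j → u j = 0 := fun j hj => hB₀ j (le_trans (le_max_left _ _) hj)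
  have hBv : ∀ j, max B₀ B₁ ≤ j → v j = 0 := fun j hj => hB₁ j (le_trans (le_max_right _ _) hj)
  have hsum : ∑ j ∈ Finset.range (max B₀ B₁), u j = ∑ j ∈ Finset.range (max B₀ B₁), v j := by
    rw [← psize_eq_sum_range hBu, ← psize_eq_sum_range hBv, hs]
  have := (Finset.sum_eq_sum_iff_of_le (fun i _ => hle i)).1 hsum
  funext x
  by_cases hx : x < max B₀ B₁
  · exact this x (Finset.mem_range.2 hx)
  · rw [hBu x (by omega), hBv x (by omega)]

lemma exists_gt {u v : ℕ → ℕ} (hu : IsPartition u) (hv : IsPartition v)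
    (hs : psize u = psize v) (hne : u ≠ v) : ∃ j, u j < v j := by
  by_contra hc
  push_neg at hc
  exact hne (eq_of_le_psize hv hu hs.symm hc).symm

lemma idx_bound {k n : ℕ} {u v : ℕ → ℕ} (hu : IsPartition u) (hv : IsPartition v)
    (hun : psize u = n) (hvn : psize v = n)
    (Rv : ∀ j, u j < v j → n + 1 ≤ (j + 1) * v j + k)
    {i : ℕ} (hmin : ∀ j, j < i → u j = v j) (hi : v i < u i) : i < k := by
  obtain ⟨j', hj'⟩ := exists_gt hu hv (by omega) (by
    intro hc; rw [hc] at hi; omega)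
  have hij' : i < j' := by
    rcases lt_trichotomy j' i with h | h | h
    · rw [hmin j' h] at hj'; omega
    · subst h; omega
    · exact h
  have hba : v j' + 1 ≤ u i := by
    have := hv.1 (le_of_lt hij')
    omega
  have hsum1 : i * u i ≤ ∑ j ∈ Finset.range i, v j := by
    calc i * u i = ∑ _j ∈ Finset.range i, u i := by simp [mul_comm]
    _ ≤ ∑ j ∈ Finset.range i, v j := Finset.sum_le_sum (by
        intro j hj
        simp only [Finset.mem_range] at hj
        rw [← hmin j hj]
        exact hu.1 (le_of_lt hj))
  have hsum2 : (j' + 1 - i) * v j' ≤ ∑ j ∈ Finset.Ico i (j'+1), v j := by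
    calc (j' + 1 - i) * v j' = ∑ _j ∈ Finset.Ico i (j'+1), v j' := by
          rw [Finset.sum_const, Nat.card_Ico, smul_eq_mul]
    _ ≤ _ := Finset.sum_le_sum (by
        intro j hj
        simp only [Finset.mem_Ico] at hj
        exact hv.1 (by omega))
  have hsplit : ∑ j ∈ Finset.range i, v j + ∑ j ∈ Finset.Ico i (j'+1), v j
      = ∑ j ∈ Finset.range (j'+1), v j := by
    rw [Finset.range_eq_Ico, Finset.range_eq_Ico]
    exact Finset.sum_Ico_consecutive _ (Nat.zero_le i) (by omega)
  have htot : ∑ j ∈ Finset.range (j'+1), v j ≤ n := by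
    rw [← hvn]; exact sum_range_le_psize hv _
  have hR := Rv j' hj'
  have hXb : (j' + 1) * v j' = (j' + 1 - i) * v j' + i * v j' := by
    rw [← Nat.add_mul]
    congr 1
    omega
  have hab : i * (v j' + 1) ≤ i * u i := Nat.mul_le_mul_left i hba
  have hib : i * (v j' + 1) = i * v j' + i := by ring
  omega

lemma arith_case1 (k n i m a w₀ : ℕ) (hik : i + 1 ≤ k) (hmk : m ≤ k)
    (hkk : k * k + 2 * k ≤ n)
    (hα : n + 1 ≤ (i + 1) * a + k)
    (hδ : n + 1 ≤ m * w₀ + k)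
    (hε : m * w₀ + (i + 1) * a ≤ m * (i + 1) + n) : False := by
  have h1 : m * (i + 1) ≤ k * k := Nat.mul_le_mul hmk hik
  omega

lemma arith_case2 (k n i m a c w h' : ℕ) (hkk : k * k + 2 * k ≤ n)
    (hik : i + 1 ≤ k) (hmk : m ≤ k)
    (hα : n + 1 ≤ (i + 1) * a + k)
    (hβ : n + 1 ≤ (c + 1) * w + k)
    (hγ : (c + 1) * w + (i + 1) * a ≤ (c + 1) * (i + 1) + n)
    (hδ : n + 1 ≤ m * h' + k)
    (hε : m * h' + (i * a + c) ≤ m * (i + 1) + n) : False := by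
  have e1 : (c + 1) * (i + 1) = (i + 1) * c + (i + 1) := by ring
  have hA1 : (i + 1) * a + 1 ≤ (i + 1) * c + (i + 1) + k := by omega
  have hA2 : i * a + c + 1 ≤ m * (i + 1) + k := by omega
  have hA3 : (i + 1) * (i * a + c + 1) ≤ (i + 1) * (m * (i + 1) + k) :=
    Nat.mul_le_mul_left _ hA2
  have e2 : (i + 1) * (i * a + c + 1) = (i + 1) * (i * a) + (i + 1) * c + (i + 1) := by ring
  have e3 : (i + 1) * (m * (i + 1) + k) = (i + 1) * (m * (i + 1)) + (i + 1) * k := by ring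
  have e4 : (i + 1) * (i * a) + (i + 1) * a = (i + 1) * ((i + 1) * a) := by ring
  have hA4 : (i + 1) * ((i + 1) * a) + 1
      ≤ (i + 1) * (m * (i + 1)) + (i + 1) * k + k := by omega
  have hA5 : (i + 1) * (n + 1) ≤ (i + 1) * ((i + 1) * a + k) := Nat.mul_le_mul_left _ hα
  have e5 : (i + 1) * ((i + 1) * a + k) = (i + 1) * ((i + 1) * a) + (i + 1) * k := by ring
  have e6 : (i + 1) * (n + 1) = (i + 1) * n + (i + 1) := by ring
  have hA6 : (i + 1) * n + (i + 1) + 1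
      ≤ (i + 1) * (m * (i + 1)) + 2 * ((i + 1) * k) + k := by omega
  have h7 : (i + 1) * (m * (i + 1)) ≤ (i + 1) * ((i + 1) * k) := by
    apply Nat.mul_le_mul_left
    calc m * (i + 1) ≤ k * (i + 1) := Nat.mul_le_mul_right _ hmk
    _ = (i + 1) * k := by ring
  have h8 : (i + 1) * ((i + 1) * k) + k ≤ (i + 1) * (k * k) + (i + 1) := by
    obtain ⟨d, hd⟩ : ∃ d, k = (i + 1) + d := ⟨k - (i + 1), by omega⟩
    rw [hd]
    have h9 : d ≤ ((i + 1) * (i + 1)) * d := Nat.le_mul_of_pos_left d (by positivity)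
    have e7 : (i + 1) * (((i + 1) + d) * ((i + 1) + d)) + (i + 1)
        = (i + 1) * ((i + 1) * ((i + 1) + d)) + ((i + 1) * (i + 1)) * d
          + (i + 1) * (d * d) + (i + 1) := by ring
    omega
  have h10 : (i + 1) * (k * k + 2 * k) ≤ (i + 1) * n := Nat.mul_le_mul_left _ hkk
  have e9 : (i + 1) * (k * k + 2 * k) = (i + 1) * (k * k) + 2 * ((i + 1) * k) := by ring
  omega

lemma key_lemma {k n : ℕ} (hk : 1 ≤ k) (hn : k ^ 2 + 2 * k ≤ n)
    {f g : ℕ → ℕ} (hf : IsPartition f) (hg : IsPartition g)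
    (hfn : psize f = n) (hgn : psize g = n)
    (hdel : ∀ δ : ℕ → ℕ, IsDeletion k δ f ↔ IsDeletion k δ g)
    {i : ℕ} (hmin : ∀ j, j < i → f j = g j) (hfg : g i < f i) : False := by
  have hkk : k * k + 2 * k ≤ n := by
    have : k ^ 2 = k * k := sq k
    omega
  -- row facts
  have Rfg : ∀ j, g j < f j → n + 1 ≤ (j + 1) * f j + k := by
    intro j hj
    have := Rfact hf (fun δ hδ => (hdel δ).1 hδ) hj
    omega
  have Rgf : ∀ j, f j < g j → n + 1 ≤ (j + 1) * g j + k := by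
    intro j hj
    have := Rfact hg (fun δ hδ => (hdel δ).2 hδ) hj
    omega
  -- conjugate transfer
  have hdelc : ∀ ε : ℕ → ℕ, IsDeletion k ε (conj f) ↔ IsDeletion k ε (conj g) := by
    intro ε
    constructor
    · intro hε
      have h1 := del_conj (conj_isPartition hf) hε
      rw [conj_conj hf] at h1
      have h2 := (hdel _).1 h1
      have h3 := del_conj hg h2
      rwa [conj_conj hε.1] at h3
    · intro hε
      have h1 := del_conj (conj_isPartition hg) hε
      rw [conj_conj hg] at h1
      have h2 := (hdel _).2 h1
      have h3 := del_conj hf h2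
      rwa [conj_conj hε.1] at h3
  have hcf : IsPartition (conj f) := conj_isPartition hf
  have hcg : IsPartition (conj g) := conj_isPartition hg
  have hcfn : psize (conj f) = n := by rw [psize_conj hf]; exact hfn
  have hcgn : psize (conj g) = n := by rw [psize_conj hg]; exact hgn
  -- column facts
  have Cfg : ∀ c, conj g c < conj f c → n + 1 ≤ (c + 1) * conj f c + k := by
    intro c hc
    have := Rfact hcf (fun δ hδ => (hdelc δ).1 hδ) hc
    omega
  have Cgf : ∀ c, conj f c < conj g c → n + 1 ≤ (c + 1) * conj g c + k := by
    intro c hc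
    have := Rfact hcg (fun δ hδ => (hdelc δ).2 hδ) hc
    omega
  -- the column (g i) distinguishes the conjugates
  have hwge : i + 1 ≤ conj f (g i) := conj_ge_of_row hf hfg
  have hwle : conj g (g i) ≤ i := conj_le_of_row hg i
  have hex : ∃ c, conj f c ≠ conj g c := ⟨g i, by omega⟩
  classical
  have hc₀ : conj f (Nat.find hex) ≠ conj g (Nat.find hex) := Nat.find_spec hex
  have hminc : ∀ c, c < Nat.find hex → conj f c = conj g c := by
    intro c hc
    have := Nat.find_min hex hc
    tauto
  -- index bounds
  have hik : i < k := idx_bound hf hg hfn hgn Rgf hmin hfg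
  have hc₀k : Nat.find hex < k := by
    rcases lt_or_gt_of_ne hc₀ with hlt | hgt
    · exact idx_bound hcg hcf hcgn hcfn Cfg (fun c hc => (hminc c hc).symm) hlt
    · exact idx_bound hcf hcg hcfn hcgn Cgf hminc hgt
  -- basic facts for the final counting argument
  have hα : n + 1 ≤ (i + 1) * f i + k := Rfg i hfg
  have hβ : n + 1 ≤ (g i + 1) * conj f (g i) + k := Cfg (g i) (by omega)
  have hγ : (g i + 1) * conj f (g i) + (i + 1) * f i ≤ (g i + 1) * (i + 1) + n := by
    have h1 := conj_bnd hf (g i) i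
    have h2 := rect_le_sum hf i
    rw [hfn] at h1
    omega
  rcases lt_or_gt_of_ne hc₀ with hcase | hcase
  · -- case 2 : conj f c₀ < conj g c₀
    have hδ2 : n + 1 ≤ (Nat.find hex + 1) * conj g (Nat.find hex) + k :=
      Cgf (Nat.find hex) hcase
    have hε2 : (Nat.find hex + 1) * conj g (Nat.find hex) + (i * f i + g i)
        ≤ (Nat.find hex + 1) * (i + 1) + n := by
      have h1 := conj_bnd hg (Nat.find hex) i
      rw [hgn] at h1
      have h2 : i * f i + g i ≤ ∑ j ∈ Finset.range (i + 1), g j := by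
        rw [Finset.sum_range_succ]
        have h3 : i * f i ≤ ∑ j ∈ Finset.range i, g j := by
          calc i * f i = ∑ _j ∈ Finset.range i, f i := by simp [mul_comm]
          _ ≤ _ := Finset.sum_le_sum (by
              intro j hj
              simp only [Finset.mem_range] at hj
              rw [← hmin j hj]
              exact hf.1 (le_of_lt hj))
        omega
      omega
    exact arith_case2 k n i (Nat.find hex + 1) (f i) (g i) (conj f (g i))
      (conj g (Nat.find hex)) hkk (by omega) (by omega) hα hβ hγ hδ2 hε2
  · -- case 1 : conj g c₀ < conj f c₀
    have hδ1 : n + 1 ≤ (Nat.find hex + 1) * conj f (Nat.find hex) + k :=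
      Cfg (Nat.find hex) hcase
    have hε1 : (Nat.find hex + 1) * conj f (Nat.find hex) + (i + 1) * f i
        ≤ (Nat.find hex + 1) * (i + 1) + n := by
      have h1 := conj_bnd hf (Nat.find hex) i
      have h2 := rect_le_sum hf i
      rw [hfn] at h1
      omega
    exact arith_case1 k n i (Nat.find hex + 1) (f i) (conj f (Nat.find hex))
      (by omega) (by omega) hkk hα hδ1 hε1


/-- Every partition of `n ≥ k²+2k` (k ≥ 1) is determined by its set of k-deletions. -/
theorem partition_reconstruction (k n : ℕ) (hk : 1 ≤ k) (hn : k ^ 2 + 2 * k ≤ n)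
    (f g : ℕ → ℕ) (hf : IsPartition f) (hg : IsPartition g)
    (hfn : psize f = n) (hgn : psize g = n)
    (h : ∀ δ : ℕ → ℕ, IsDeletion k δ f ↔ IsDeletion k δ g) :
    f = g := by
  by_contra hne
  have hex : ∃ j, f j ≠ g j := Function.ne_iff.1 hne
  classical
  have hj₀ : f (Nat.find hex) ≠ g (Nat.find hex) := Nat.find_spec hex
  have hminr : ∀ j, j < Nat.find hex → f j = g j := by
    intro j hj
    have := Nat.find_min hex hj
    tauto
  rcases lt_or_gt_of_ne hj₀ with hlt | hgt
  · exact key_lemma hk hn hg hf hgn hfn (fun δ => (h δ).symm)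
      (fun j hj => (hminr j hj).symm) hlt
  · exact key_lemma hk hn hf hg hfn hgn h hminr hgt
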